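/- For every index i ∈ {1,…,n}, every set S ⊆ {1,…,n}, and every m with 0 ≤ m ≤ n − |S|, one has h_{S,i}(h⃗_Sᵐ(0⃗)) ≤ g_{S,i}(0⃗). -/

import Mathlib

/-- The pruned family of functions `g_{S,i}`: `g_{S,i} = f_i ∘ (g_{S∪{i},1},…,g_{S∪{i},n})`
if `i ∉ S`, and the constant-`false` (constant-0) function if `i ∈ S`. -/
def prunedG (n : ℕ) (f : Fin n → (Fin n → Bool) → Bool) :
    Finset (Fin n) → Fin n → (Fin n → Bool) → Bool
  | S, i => fun x =>
    if h : i ∈ S then false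
    else f i (fun j => prunedG n f (insert i S) j x)
termination_by S _ => n - S.card
decreasing_by
  have h1 : (insert i S).card = S.card + 1 := Finset.card_insert_of_notMem h
  have h2 : (insert i S).card ≤ n := by
    simpa using Finset.card_le_univ (insert i S)
  omega

/-- The family of functions `h_{S,j}`: `h_{S,j} = f_j` if `j ∉ S`, and the
constant-`false` (constant-0) function if `j ∈ S`. -/
def hFam (n : ℕ) (f : Fin n → (Fin n → Bool) → Bool)
    (S : Finset (Fin n)) (j : Fin n) : (Fin n → Bool) → Bool :=
  if j ∈ S then fun _ => false else f j

section Aux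

variable {n : ℕ} (f : Fin n → (Fin n → Bool) → Bool)

lemma prunedG_eq (S : Finset (Fin n)) (i : Fin n) (x : Fin n → Bool) :
    prunedG n f S i x =
      if i ∈ S then false else f i (fun j => prunedG n f (insert i S) j x) := by
  conv_lhs => rw [prunedG]
  split <;> simp_all

lemma hFam_mono (hf : ∀ i, Monotone (f i)) (S : Finset (Fin n)) (j : Fin n) :
    Monotone (hFam n f S j) := by
  unfold hFam; split
  · exact monotone_const
  · exact hf j

/-- The iterates `h⃗_Sᵐ(0⃗)`. -/
def It (S : Finset (Fin n)) (m : ℕ) : Fin n → Bool :=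
  (fun x j => hFam n f S j x)^[m] (fun _ => false)

lemma It_succ (S : Finset (Fin n)) (m : ℕ) :
    It f S (m + 1) = fun j => hFam n f S j (It f S m) :=
  Function.iterate_succ_apply' _ _ _

lemma It_succ_apply (S : Finset (Fin n)) (m : ℕ) (j : Fin n) :
    It f S (m + 1) j = hFam n f S j (It f S m) := by
  rw [It_succ]

lemma hFam_insert_of_ne {S : Finset (Fin n)} {i j : Fin n} (hji : j ≠ i) :
    hFam n f S j = hFam n f (insert i S) j := by
  unfold hFam
  simp [Finset.mem_insert, hji]

lemma It_compare (hf : ∀ i, Monotone (f i)) (S : Finset (Fin n)) (i : Fin n) :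
    ∀ m : ℕ, (∀ k ≤ m, It f S k i = false) → It f S m ≤ It f (insert i S) m := by
  intro m
  induction m with
  | zero => intro _; exact le_refl _
  | succ m ih =>
    intro hz j
    by_cases hji : j = i
    · subst hji
      have h0 : It f S (m + 1) j = false := hz (m + 1) le_rfl
      rw [h0]
      exact Bool.false_le _
    · rw [It_succ_apply, It_succ_apply, hFam_insert_of_ne f hji]
      exact hFam_mono f hf (insert i S) j
        (ih (fun k hk => hz k (Nat.le_succ_of_le hk)))

lemma main (hf : ∀ i, Monotone (f i)) :
    ∀ μ : ℕ, ∀ S : Finset (Fin n), ∀ m : ℕ, ∀ i : Fin n,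
      n - S.card + m = μ → m ≤ n - S.card →
      hFam n f S i (It f S m) ≤ prunedG n f S i (fun _ => false) := by
  intro μ
  induction μ using Nat.strong_induction_on with
  | _ μ IH =>
    intro S m i hμ hm
    by_cases hiS : i ∈ S
    · simp [hFam, hiS, prunedG_eq, Bool.false_le]
    · rw [prunedG_eq]
      rw [if_neg hiS]
      have hins : (insert i S).card = S.card + 1 := Finset.card_insert_of_notMem hiS
      have hinsle : (insert i S).card ≤ n := by simpa using Finset.card_le_univ (insert i S)
      have hcard : S.card < n := by omega
      cases m with
      | zero =>
        have hL : hFam n f S i (It f S 0) = f i (fun _ => false) := by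
          simp [hFam, hiS, It]
        rw [hL]
        exact hf i (fun j => Bool.false_le _)
      | succ m =>
        by_cases hR : f i (fun j => prunedG n f (insert i S) j (fun _ => false)) = true
        · rw [hR]; exact Bool.le_true _
        · have hRf : f i (fun j => prunedG n f (insert i S) j (fun _ => false)) = false := by
            simpa using hR
          -- i-th coordinate of all iterates up to m+1 is false
          have hz : ∀ k ≤ m + 1, It f S k i = false := by
            intro k hk
            cases k with
            | zero => rfl
            | succ k =>
              have h1 : hFam n f S i (It f S k) ≤ prunedG n f S i (fun _ => false) :=
                IH (n - S.card + k) (by omega) S k i rfl (by omega)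
              have h2 : prunedG n f S i (fun _ => false) = false := by
                rw [prunedG_eq, if_neg hiS, hRf]
              rw [h2] at h1
              rw [It_succ_apply]
              exact le_antisymm h1 (Bool.false_le _)
          -- pointwise bound It f S (m+1) ≤ prunedG (insert i S) · 0
          have hpt : ∀ j, It f S (m + 1) j ≤ prunedG n f (insert i S) j (fun _ => false) := by
            intro j
            by_cases hjins : j ∈ insert i S
            · rcases Finset.mem_insert.mp hjins with hji | hjS
              · subst hji
                rw [hz (m + 1) le_rfl]
                exact Bool.false_le _
              · rw [It_succ]
                simp [hFam, hjS, Bool.false_le]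
            · have hji : j ≠ i := fun h => hjins (h ▸ Finset.mem_insert_self i S)
              have hjS : j ∉ S := fun h => hjins (Finset.mem_insert_of_mem h)
              have hcmp : It f S m ≤ It f (insert i S) m :=
                It_compare f hf S i m (fun k hk => hz k (Nat.le_succ_of_le hk))
              calc It f S (m + 1) j = hFam n f S j (It f S m) := by rw [It_succ]
                _ = hFam n f (insert i S) j (It f S m) := by
                    rw [hFam_insert_of_ne f hji]
                _ ≤ hFam n f (insert i S) j (It f (insert i S) m) :=
                    hFam_mono f hf (insert i S) j hcmp
                _ ≤ prunedG n f (insert i S) j (fun _ => false) :=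
                    IH (n - (insert i S).card + m) (by omega) (insert i S) m j rfl (by omega)
          have hL : hFam n f S i (It f S (m + 1)) = f i (It f S (m + 1)) := by
            simp [hFam, hiS]
          rw [hL]
          exact hf i hpt

end Aux

/-- Lemma 4: for every index `i`, set `S`, and `m ≤ n − |S|`,
`h_{S,i}(h⃗_Sᵐ(0⃗)) ≤ g_{S,i}(0⃗)`. -/
theorem hFam_iterate_le_prunedG {n : ℕ} (hn : 1 ≤ n)
    (f : Fin n → (Fin n → Bool) → Bool) (hf : ∀ i, Monotone (f i))
    (i : Fin n) (S : Finset (Fin n)) (m : ℕ) (hm : m ≤ n - S.card) :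
    hFam n f S i ((fun x j => hFam n f S j x)^[m] (fun _ => false)) ≤
      prunedG n f S i (fun _ => false) := by
  exact main f hf (n - S.card + m) S m i rfl hm
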